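/- For every partition λ and every integer r with r ≥ |λ| + λ₁, the identity Σ_ν |SYT(ν)| = C(r, |λ|)·|SYT(λ)| holds, where the sum ranges over partitions ν of size r such that the skew diagram λ^{(r+λ₁)}/ν is a horizontal strip, λ^{(n)} denotes the partition (n - |λ|, λ₁, λ₂, ...), and C(r, |λ|) is the binomial coefficient. -/

import Mathlib

namespace YoungDiagram

lemma le_iff_rowLen {μ ν : YoungDiagram} : μ ≤ ν ↔ ∀ i, μ.rowLen i ≤ ν.rowLen i := by
  constructor
  · intro h i
    by_contra hc
    push_neg at hc
    have : (i, ν.rowLen i) ∈ μ := mem_iff_lt_rowLen.2 hc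
    have h2 := h this
    rw [mem_iff_lt_rowLen] at h2
    omega
  · intro h c hc
    obtain ⟨i, j⟩ := c
    rw [mem_iff_lt_rowLen] at hc ⊢
    exact lt_of_lt_of_le hc (h i)

lemma rowLen_eq_zero_iff {μ : YoungDiagram} {i : ℕ} : μ.rowLen i = 0 ↔ (i, 0) ∉ μ := by
  rw [mem_iff_lt_rowLen]; omega

lemma rowLen_le_card (μ : YoungDiagram) (i : ℕ) : μ.rowLen i ≤ μ.card := by
  rw [rowLen_eq_card]
  exact Finset.card_le_card (Finset.filter_subset _ _)

lemma fst_lt_card {μ : YoungDiagram} {c : ℕ × ℕ} (hc : c ∈ μ) : c.1 < μ.card := by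
  have hsub : (Finset.range (c.1 + 1)).image (fun t => (t, c.2)) ⊆ μ.cells := by
    intro x hx
    simp only [Finset.mem_image, Finset.mem_range] at hx
    obtain ⟨t, ht, rfl⟩ := hx
    exact μ.up_left_mem (by omega) le_rfl hc
  have := Finset.card_le_card hsub
  rwa [Finset.card_image_of_injective _ (fun a b hab => (Prod.mk.injEq _ _ _ _ ▸ hab : _ ∧ _).1),
    Finset.card_range, Nat.add_one_le_iff] at this

lemma snd_lt_card {μ : YoungDiagram} {c : ℕ × ℕ} (hc : c ∈ μ) : c.2 < μ.card :=
  lt_of_lt_of_le (mem_iff_lt_rowLen.1 ((mem_cells _).1 hc)) (μ.rowLen_le_card c.1)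

lemma card_eq_sum_rowLens' (μ : YoungDiagram) {K : ℕ} (hK : ∀ c ∈ μ, Prod.fst c < K) :
    μ.card = ∑ i ∈ Finset.range K, μ.rowLen i := by
  have : μ.cells = (Finset.range K).biUnion (fun i => μ.row i) := by
    ext c
    simp only [Finset.mem_biUnion, Finset.mem_range, mem_row_iff]
    constructor
    · intro hc
      exact ⟨c.1, hK c ((mem_cells _).1 hc), (mem_cells _).1 hc, rfl⟩
    · rintro ⟨i, _, hc, _⟩
      exact (mem_cells _).2 hc
  rw [YoungDiagram.card, this, Finset.card_biUnion]
  · exact Finset.sum_congr rfl fun i _ => (rowLen_eq_card μ).symm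
  · intro i _ j _ hij
    simp only [Finset.disjoint_left, mem_row_iff]
    rintro c ⟨_, rfl⟩ ⟨_, h⟩
    exact hij h

end YoungDiagram


/-- A standard Young tableau of the skew shape `Λ / μ` (for `μ ⊆ Λ`): a filling of the
cells of `Λ` not in `μ` by the numbers `1, …, |Λ| - |μ|`, bijectively, strictly
increasing along rows and columns, and zero outside the skew diagram. -/
def IsSkewSYT (Λ μ : YoungDiagram) (f : ℕ × ℕ → ℕ) : Prop :=
  μ ≤ Λ ∧
  (∀ c : ℕ × ℕ, c ∉ Λ.cells \ μ.cells → f c = 0) ∧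
  Set.BijOn f ↑(Λ.cells \ μ.cells) ↑(Finset.Icc 1 (Λ.card - μ.card)) ∧
  (∀ i j₁ j₂ : ℕ, (i, j₁) ∈ Λ.cells \ μ.cells → (i, j₂) ∈ Λ.cells \ μ.cells →
    j₁ < j₂ → f (i, j₁) < f (i, j₂)) ∧
  (∀ i₁ i₂ j : ℕ, (i₁, j) ∈ Λ.cells \ μ.cells → (i₂, j) ∈ Λ.cells \ μ.cells →
    i₁ < i₂ → f (i₁, j) < f (i₂, j))

/-- The skew diagram `Λ / ν` is a horizontal strip: at most one cell in each column. -/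
def IsHorizontalStrip (Λ ν : YoungDiagram) : Prop :=
  ν ≤ Λ ∧ ∀ i₁ i₂ j : ℕ, (i₁, j) ∈ Λ.cells \ ν.cells → (i₂, j) ∈ Λ.cells \ ν.cells → i₁ = i₂

open YoungDiagram

def Below (μ ν : YoungDiagram) : Prop := μ ≤ ν ∧ ν.card = μ.card + 1

lemma hs_iff {Λ ν : YoungDiagram} :
    IsHorizontalStrip Λ ν ↔ (∀ i, ν.rowLen i ≤ Λ.rowLen i) ∧ (∀ i, Λ.rowLen (i + 1) ≤ ν.rowLen i) := by
  constructor
  · rintro ⟨hle, hcol⟩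
    refine ⟨le_iff_rowLen.1 hle, fun i => ?_⟩
    by_contra hc
    push_neg at hc
    set j := ν.rowLen i with hj
    have h1 : (i, j) ∈ Λ.cells \ ν.cells := by
      simp only [Finset.mem_sdiff, mem_cells, mem_iff_lt_rowLen]
      constructor
      · exact lt_of_lt_of_le hc (Λ.rowLen_anti i (i+1) (by omega))
      · omega
    have h2 : (i + 1, j) ∈ Λ.cells \ ν.cells := by
      simp only [Finset.mem_sdiff, mem_cells, mem_iff_lt_rowLen]
      refine ⟨hc, ?_⟩
      have := ν.rowLen_anti i (i+1) (by omega)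
      omega
    exact absurd (hcol _ _ _ h1 h2) (by omega)
  · rintro ⟨h1, h2⟩
    refine ⟨le_iff_rowLen.2 h1, fun i₁ i₂ j hc1 hc2 => ?_⟩
    by_contra hne
    simp only [Finset.mem_sdiff, mem_cells, mem_iff_lt_rowLen] at hc1 hc2
    rcases Nat.lt_or_ge i₁ i₂ with h | h
    · have : Λ.rowLen i₂ ≤ Λ.rowLen (i₁ + 1) := Λ.rowLen_anti _ _ (by omega)
      have := h2 i₁
      omega
    · have h' : i₂ < i₁ := by omega
      have : Λ.rowLen i₁ ≤ Λ.rowLen (i₂ + 1) := Λ.rowLen_anti _ _ (by omega)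
      have := h2 i₂
      omega

/-- `ν` is obtained from `μ` by adding one box. -/


lemma below_iff_cells {μ ν : YoungDiagram} :
    Below μ ν ↔ ∃ c, c ∉ μ.cells ∧ ν.cells = insert c μ.cells := by
  constructor
  · rintro ⟨hle, hcard⟩
    have hsub : μ.cells ⊆ ν.cells := cells_subset_iff.2 hle
    have hd : (ν.cells \ μ.cells).card = 1 := by
      rw [Finset.card_sdiff_of_subset hsub]
      have : ν.cells.card = μ.cells.card + 1 := hcard
      omega
    obtain ⟨c, hc⟩ := Finset.card_eq_one.1 hd
    refine ⟨c, ?_, ?_⟩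
    · have : c ∈ ν.cells \ μ.cells := hc ▸ Finset.mem_singleton_self c
      exact (Finset.mem_sdiff.1 this).2
    · ext x
      constructor
      · intro hx
        by_cases hxμ : x ∈ μ.cells
        · exact Finset.mem_insert_of_mem hxμ
        · have : x ∈ ν.cells \ μ.cells := Finset.mem_sdiff.2 ⟨hx, hxμ⟩
          rw [hc, Finset.mem_singleton] at this
          exact this ▸ Finset.mem_insert_self _ _
      · intro hx
        rcases Finset.mem_insert.1 hx with h | hx
        · have hm : c ∈ ν.cells \ μ.cells := hc ▸ Finset.mem_singleton_self c
          exact h ▸ (Finset.mem_sdiff.1 hm).1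
        · exact hsub hx
  · rintro ⟨c, hc, hins⟩
    constructor
    · rw [← cells_subset_iff, hins]
      exact Finset.subset_insert _ _
    · rw [YoungDiagram.card, YoungDiagram.card, hins, Finset.card_insert_of_notMem hc]

lemma rowLen_eq_of_forall_mem_iff {ν : YoungDiagram} {i k : ℕ}
    (h : ∀ j, (i, j) ∈ ν ↔ j < k) : ν.rowLen i = k := by
  rcases Nat.lt_trichotomy (ν.rowLen i) k with h' | h' | h'
  · have := (h (ν.rowLen i)).2 h'
    rw [mem_iff_lt_rowLen] at this; omega
  · exact h'
  · have := (h k).1 (mem_iff_lt_rowLen.2 h')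
    omega

lemma below_iff_rowLen {μ ν : YoungDiagram} :
    Below μ ν ↔ ∃ i, ν.rowLen i = μ.rowLen i + 1 ∧ ∀ t, t ≠ i → ν.rowLen t = μ.rowLen t := by
  rw [below_iff_cells]
  constructor
  · rintro ⟨⟨i, j⟩, hc, hins⟩
    have hmem : ∀ x, x ∈ ν ↔ (x = (i, j) ∨ x ∈ μ) := by
      intro x
      rw [← mem_cells, hins, Finset.mem_insert, mem_cells]
    have hij : j = μ.rowLen i := by
      have hle : μ.rowLen i ≤ j := by
        by_contra hlt
        push_neg at hlt
        exact hc ((mem_cells _).2 (mem_iff_lt_rowLen.2 hlt))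
      have : j ≤ μ.rowLen i := by
        by_contra hlt
        push_neg at hlt
        -- then (i, μ.rowLen i) ∈ ν (below (i,j)) but not = (i,j), not in μ
        have h1 : (i, μ.rowLen i) ∈ ν := by
          have : (i, j) ∈ ν := (hmem _).2 (Or.inl rfl)
          exact ν.up_left_mem le_rfl (by omega) this
        rcases (hmem _).1 h1 with h2 | h2
        · have : μ.rowLen i = j := congrArg Prod.snd h2
          omega
        · rw [mem_iff_lt_rowLen] at h2; omega
      omega
    refine ⟨i, ?_, ?_⟩
    · apply rowLen_eq_of_forall_mem_iff
      intro j'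
      rw [hmem, mem_iff_lt_rowLen]
      constructor
      · rintro (h | h)
        · have : j' = j := congrArg Prod.snd h
          omega
        · omega
      · intro h
        rcases Nat.lt_or_ge j' (μ.rowLen i) with h' | h'
        · exact Or.inr h'
        · left; rw [Prod.mk.injEq]; omega
    · intro t ht
      apply rowLen_eq_of_forall_mem_iff
      intro j'
      rw [hmem, mem_iff_lt_rowLen]
      constructor
      · rintro (h | h)
        · exact absurd (congrArg Prod.fst h) ht
        · exact h
      · exact Or.inr
  · rintro ⟨i, h1, h2⟩
    refine ⟨(i, μ.rowLen i), ?_, ?_⟩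
    · rw [mem_cells, mem_iff_lt_rowLen]; omega
    · ext ⟨a, b⟩
      rw [Finset.mem_insert, mem_cells, mem_cells, mem_iff_lt_rowLen, mem_iff_lt_rowLen,
        Prod.mk.injEq]
      by_cases hai : a = i
      · subst hai; constructor
        · intro h; omega
        · rintro (⟨-, rfl⟩ | h) <;> omega
      · rw [h2 a hai]
        constructor
        · exact fun h => Or.inr h
        · rintro (⟨h, -⟩ | h)
          · exact absurd h hai
          · exact h

lemma syt_iff {ν : YoungDiagram} {f : ℕ × ℕ → ℕ} :
    IsSkewSYT ν ⊥ f ↔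
      (∀ c : ℕ × ℕ, c ∉ ν.cells → f c = 0) ∧
      Set.BijOn f ↑ν.cells ↑(Finset.Icc 1 ν.card) ∧
      (∀ i j₁ j₂ : ℕ, (i, j₁) ∈ ν → (i, j₂) ∈ ν → j₁ < j₂ → f (i, j₁) < f (i, j₂)) ∧
      (∀ i₁ i₂ j : ℕ, (i₁, j) ∈ ν → (i₂, j) ∈ ν → i₁ < i₂ → f (i₁, j) < f (i₂, j)) := by
  simp only [IsSkewSYT, cells_bot, Finset.sdiff_empty, bot_le, true_and, mem_cells]
  rfl

lemma syt_val_lt {ν : YoungDiagram} {f : ℕ × ℕ → ℕ} (hf : IsSkewSYT ν ⊥ f) {n : ℕ}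
    (hn : ν.card ≤ n) (c : ℕ × ℕ) : f c < n + 1 := by
  rw [syt_iff] at hf
  by_cases hc : c ∈ ν.cells
  · have := hf.2.1.mapsTo hc
    simp only [Finset.coe_Icc, Set.mem_Icc] at this
    omega
  · rw [hf.1 c hc]; omega

set_option synthInstance.maxHeartbeats 1000000 in
/-- Generic finiteness of families of (diagram, tableau) pairs with bounded size. -/
lemma finite_pairs (n : ℕ) (P : YoungDiagram → (ℕ × ℕ → ℕ) → Prop)
    (h : ∀ ν f, P ν f → ν.card = n ∧ IsSkewSYT ν ⊥ f) :
    Finite {p : YoungDiagram × (ℕ × ℕ → ℕ) // P p.1 p.2} := by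
  classical
  set box : Finset (ℕ × ℕ) := Finset.range n ×ˢ Finset.range n with hbox
  have hsub : ∀ (ν : YoungDiagram), ν.card = n → ν.cells ⊆ box := by
    intro ν hν c hc
    rw [hbox, Finset.mem_product, Finset.mem_range, Finset.mem_range]
    exact ⟨hν ▸ YoungDiagram.fst_lt_card ((mem_cells _).1 hc),
      hν ▸ YoungDiagram.snd_lt_card ((mem_cells _).1 hc)⟩
  let F : {p : YoungDiagram × (ℕ × ℕ → ℕ) // P p.1 p.2} →
      (↥box.powerset × ({c // c ∈ box} → Fin (n + 1))) := fun p =>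
    (⟨p.1.1.cells, Finset.mem_powerset.2 (hsub _ (h _ _ p.2).1)⟩,
     fun c => ⟨p.1.2 c.1, syt_val_lt (h _ _ p.2).2 (le_of_eq (h _ _ p.2).1) c.1⟩)
  apply Finite.of_injective F
  rintro ⟨⟨ν, f⟩, hp⟩ ⟨⟨ν', f'⟩, hp'⟩ heq
  simp only [F, Prod.mk.injEq, Subtype.mk.injEq] at heq
  obtain ⟨hcells, hfun⟩ := heq
  have hν : ν = ν' := by ext c; rw [hcells]
  subst hν
  have hf : f = f' := by
    funext c
    by_cases hc : c ∈ box
    · have := congrFun hfun ⟨c, hc⟩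
      exact congrArg Fin.val this
    · have h1 := (syt_iff.1 (h _ _ hp).2).1 c (fun hmem => hc (hsub _ (h _ _ hp).1 hmem))
      have h2 := (syt_iff.1 (h _ _ hp').2).1 c (fun hmem => hc (hsub _ (h _ _ hp').1 hmem))
      exact h1.trans h2.symm
  exact Subtype.ext (Prod.ext rfl hf)

lemma finite_diagrams (P : YoungDiagram → Prop) (N : ℕ) (h : ∀ ν, P ν → ν.card ≤ N) :
    Finite {ν : YoungDiagram // P ν} := by
  classical
  set box : Finset (ℕ × ℕ) := Finset.range N ×ˢ Finset.range N with hbox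
  have hsub : ∀ (ν : YoungDiagram), P ν → ν.cells ⊆ box := by
    intro ν hν c hc
    rw [hbox, Finset.mem_product, Finset.mem_range, Finset.mem_range]
    have h1 := YoungDiagram.fst_lt_card ((mem_cells _).1 hc)
    have h2 := YoungDiagram.snd_lt_card ((mem_cells _).1 hc)
    have := h _ hν
    omega
  let F : {ν : YoungDiagram // P ν} → ↥box.powerset := fun p =>
    ⟨p.1.cells, Finset.mem_powerset.2 (hsub _ p.2)⟩
  apply Finite.of_injective F
  rintro ⟨ν, hν⟩ ⟨ν', hν'⟩ heq
  simp only [F, Subtype.mk.injEq] at heq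
  exact Subtype.ext (by ext c; show c ∈ ν.cells ↔ c ∈ ν'.cells; rw [heq])

section Pop

variable {ν : YoungDiagram} {f : ℕ × ℕ → ℕ}

lemma syt_strict_mono (hf : IsSkewSYT ν ⊥ f) {c d : ℕ × ℕ} (hc : c ∈ ν) (hd : d ∈ ν)
    (h1 : c.1 ≤ d.1) (h2 : c.2 ≤ d.2) (hne : c ≠ d) : f c < f d := by
  obtain ⟨hz, hbij, hrow, hcol⟩ := syt_iff.1 hf
  obtain ⟨i, j⟩ := c
  obtain ⟨i', j'⟩ := d
  simp only at h1 h2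
  rcases Nat.lt_or_ge i i' with hi | hi
  · rcases Nat.lt_or_ge j j' with hj | hj
    · have hmid : (i, j') ∈ ν := ν.up_left_mem (le_of_lt hi) le_rfl hd
      exact lt_trans (hrow i j j' hc hmid hj) (hcol i i' j' hmid hd hi)
    · have hj' : j = j' := le_antisymm h2 hj
      subst hj'
      exact hcol i i' j hc hd hi
  · have hi' : i = i' := le_antisymm h1 hi
    subst hi'
    have hj : j < j' := by
      rcases Nat.lt_or_ge j j' with h | h
      · exact h
      · exact absurd (show (i,j) = (i,j') by rw [le_antisymm h2 h]) hne
    exact hrow i j j' hc hd hj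

lemma syt_val_le (hf : IsSkewSYT ν ⊥ f) {c : ℕ × ℕ} (hc : c ∈ ν.cells) :
    1 ≤ f c ∧ f c ≤ ν.card := by
  have := (syt_iff.1 hf).2.1.mapsTo hc
  simpa using this

lemma syt_exists_top (hf : IsSkewSYT ν ⊥ f) (hn : 1 ≤ ν.card) :
    ∃ c, c ∈ ν.cells ∧ f c = ν.card := by
  have : (ν.card : ℕ) ∈ (↑(Finset.Icc 1 ν.card) : Set ℕ) := by simp [hn]
  obtain ⟨c, hc, hfc⟩ := (syt_iff.1 hf).2.1.surjOn this
  exact ⟨c, hc, hfc⟩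

lemma top_maximal (hf : IsSkewSYT ν ⊥ f) {c : ℕ × ℕ} (hc : c ∈ ν.cells) (hv : f c = ν.card) :
    ∀ d ∈ ν, c ≤ d → c = d := by
  intro d hd hle
  by_contra hne
  have h1 := syt_strict_mono hf ((mem_cells _).1 hc) hd hle.1 hle.2 hne
  have h2 := (syt_val_le hf ((mem_cells _).2 hd)).2
  omega

def eraseCellYD (ν : YoungDiagram) (c : ℕ × ℕ) (hmax : ∀ d ∈ ν, c ≤ d → c = d) : YoungDiagram :=
  ⟨ν.cells.erase c, by
    intro x y hyx hx
    simp only [Finset.coe_erase, Set.mem_diff, Set.mem_singleton_iff] at hx ⊢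
    obtain ⟨hx1, hx2⟩ := hx
    refine ⟨ν.isLowerSet hyx hx1, ?_⟩
    rintro rfl
    exact hx2 (hmax x ((mem_cells _).1 hx1) hyx).symm⟩

lemma mem_eraseCellYD {c : ℕ × ℕ} {hmax : ∀ d ∈ ν, c ≤ d → c = d} {x : ℕ × ℕ} :
    x ∈ (eraseCellYD ν c hmax).cells ↔ x ∈ ν.cells ∧ x ≠ c := by
  show x ∈ ν.cells.erase c ↔ _
  rw [Finset.mem_erase]; tauto

lemma below_eraseCellYD {c : ℕ × ℕ} (hc : c ∈ ν.cells) (hmax : ∀ d ∈ ν, c ≤ d → c = d) :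
    Below (eraseCellYD ν c hmax) ν := by
  rw [below_iff_cells]
  refine ⟨c, ?_, ?_⟩
  · show c ∉ ν.cells.erase c
    simp
  · show ν.cells = insert c (ν.cells.erase c)
    rw [Finset.insert_erase hc]

lemma pop_syt (hf : IsSkewSYT ν ⊥ f) {c : ℕ × ℕ} (hc : c ∈ ν.cells) (hv : f c = ν.card)
    (hmax : ∀ d ∈ ν, c ≤ d → c = d) :
    IsSkewSYT (eraseCellYD ν c hmax) ⊥ (Function.update f c 0) := by
  obtain ⟨hz, hbij, hrow, hcol⟩ := syt_iff.1 hf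
  have hcard : (eraseCellYD ν c hmax).card = ν.card - 1 := by
    have := (below_eraseCellYD hc hmax).2
    omega
  set π := eraseCellYD ν c hmax with hπ
  set g := Function.update f c 0 with hg
  have hgf : ∀ x ∈ π.cells, g x = f x := by
    intro x hx
    rw [hg, Function.update_of_ne (mem_eraseCellYD.1 hx).2]
  rw [syt_iff]
  refine ⟨?_, ⟨?_, ?_, ?_⟩, ?_, ?_⟩
  · intro d hd
    by_cases hdc : d = c
    · subst hdc; simp [hg]
    · rw [hg, Function.update_of_ne hdc]
      apply hz
      intro hdν
      exact hd (mem_eraseCellYD.2 ⟨hdν, hdc⟩)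
  · -- mapsTo
    intro d hd
    have hd' := mem_eraseCellYD.1 (by exact_mod_cast hd)
    rw [hgf d (by exact_mod_cast hd)]
    have h1 := syt_val_le hf hd'.1
    have h2 : f d ≠ ν.card := by
      intro h
      exact hd'.2 (hbij.injOn (by exact_mod_cast hd'.1) (by exact_mod_cast hc) (h.trans hv.symm))
    simp only [Finset.coe_Icc, Set.mem_Icc, hcard]
    omega
  · -- injOn
    intro d hd d' hd' heq
    rw [hgf d (by exact_mod_cast hd), hgf d' (by exact_mod_cast hd')] at heq
    exact hbij.injOn (by exact_mod_cast (mem_eraseCellYD.1 (by exact_mod_cast hd)).1)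
      (by exact_mod_cast (mem_eraseCellYD.1 (by exact_mod_cast hd')).1) heq
  · -- surjOn
    intro v hv'
    simp only [Finset.coe_Icc, Set.mem_Icc, hcard] at hv'
    have hvm : v ∈ (↑(Finset.Icc 1 ν.card) : Set ℕ) := by
      simp only [Finset.coe_Icc, Set.mem_Icc]; omega
    obtain ⟨d, hd, hfd⟩ := hbij.surjOn hvm
    have hdc : d ≠ c := by
      rintro rfl
      rw [hv] at hfd
      omega
    have hdπ : d ∈ π.cells := mem_eraseCellYD.2 ⟨by exact_mod_cast hd, hdc⟩
    exact ⟨d, by exact_mod_cast hdπ, by rw [hgf d hdπ]; exact hfd⟩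
  · intro i j₁ j₂ h1 h2 hj
    rw [hgf _ ((mem_cells _).2 h1), hgf _ ((mem_cells _).2 h2)]
    exact hrow i j₁ j₂ (mem_cells _ |>.1 (mem_eraseCellYD.1 ((mem_cells _).2 h1)).1 |> (mem_cells _).2 ∘ id |> fun h => (mem_cells _).1 h) (by
      exact (mem_cells _).1 (mem_eraseCellYD.1 ((mem_cells _).2 h2)).1) hj
  · intro i₁ i₂ j h1 h2 hi
    rw [hgf _ ((mem_cells _).2 h1), hgf _ ((mem_cells _).2 h2)]
    exact hcol i₁ i₂ j ((mem_cells _).1 (mem_eraseCellYD.1 ((mem_cells _).2 h1)).1)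
      ((mem_cells _).1 (mem_eraseCellYD.1 ((mem_cells _).2 h2)).1) hi

end Pop

-- new material:

lemma push_syt {π ν : YoungDiagram} {g : ℕ × ℕ → ℕ} (hg : IsSkewSYT π ⊥ g) {c : ℕ × ℕ}
    (hc : c ∉ π.cells) (hins : ν.cells = insert c π.cells) :
    IsSkewSYT ν ⊥ (Function.update g c ν.card) := by
  obtain ⟨hz, hbij, hrow, hcol⟩ := syt_iff.1 hg
  have hcard : ν.card = π.card + 1 := by
    show ν.cells.card = π.cells.card + 1
    rw [hins, Finset.card_insert_of_notMem hc]
  have hmem : ∀ x : ℕ × ℕ, x ∈ ν.cells ↔ x = c ∨ x ∈ π.cells := by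
    intro x; rw [hins, Finset.mem_insert]
  set f := Function.update g c ν.card with hfdef
  have hfc : f c = ν.card := by rw [hfdef]; simp
  have hfg : ∀ x : ℕ × ℕ, x ≠ c → f x = g x := fun x hx => Function.update_of_ne hx _ _
  have hπν : ∀ x : ℕ × ℕ, x ∈ π.cells → x ∈ ν.cells := fun x hx => (hmem x).2 (Or.inr hx)
  rw [syt_iff]
  refine ⟨?_, ⟨?_, ?_, ?_⟩, ?_, ?_⟩
  · intro d hd
    have hdc : d ≠ c := by rintro rfl; exact hd ((hmem d).2 (Or.inl rfl))
    rw [hfg d hdc]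
    exact hz d (fun h => hd (hπν d h))
  · intro d hd
    simp only [Finset.coe_Icc, Set.mem_Icc]
    rcases (hmem d).1 (by exact_mod_cast hd) with rfl | hdπ
    · rw [hfc]; omega
    · have hdc : d ≠ c := by rintro rfl; exact hc hdπ
      rw [hfg d hdc]
      have := syt_val_le hg hdπ
      omega
  · intro d hd d' hd' heq
    rcases (hmem d).1 (by exact_mod_cast hd) with hdc | hdπ <;>
      rcases (hmem d').1 (by exact_mod_cast hd') with hd'c | hd'π
    · rw [hdc, hd'c]
    · exfalso
      have hd'c2 : d' ≠ c := fun h => hc (h ▸ hd'π)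
      rw [hdc, hfc, hfg d' hd'c2] at heq
      have := syt_val_le hg hd'π
      omega
    · exfalso
      have hdc2 : d ≠ c := fun h => hc (h ▸ hdπ)
      rw [hd'c, hfc, hfg d hdc2] at heq
      have := syt_val_le hg hdπ
      omega
    · have hdc2 : d ≠ c := fun h => hc (h ▸ hdπ)
      have hd'c2 : d' ≠ c := fun h => hc (h ▸ hd'π)
      rw [hfg d hdc2, hfg d' hd'c2] at heq
      exact hbij.injOn (by exact_mod_cast hdπ) (by exact_mod_cast hd'π) heq
  · intro v hv
    simp only [Finset.coe_Icc, Set.mem_Icc] at hv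
    by_cases hvn : v = ν.card
    · exact ⟨c, by exact_mod_cast (hmem c).2 (Or.inl rfl), by rw [hfc, hvn]⟩
    · have : v ∈ (↑(Finset.Icc 1 π.card) : Set ℕ) := by
        simp only [Finset.coe_Icc, Set.mem_Icc]; omega
      obtain ⟨d, hd, hgd⟩ := hbij.surjOn this
      have hdπ : d ∈ π.cells := by exact_mod_cast hd
      have hdc : d ≠ c := by rintro rfl; exact hc hdπ
      exact ⟨d, by exact_mod_cast hπν d hdπ, by rw [hfg d hdc]; exact hgd⟩
  · intro i j₁ j₂ h1 h2 hj
    have h2c : (i, j₂) = c ∨ (i, j₂) ∈ π.cells := (hmem _).1 ((mem_cells _).2 h2)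
    have h1c : (i, j₁) = c ∨ (i, j₁) ∈ π.cells := (hmem _).1 ((mem_cells _).2 h1)
    rcases h1c with h1c | h1π
    · exfalso
      rcases h2c with h2c | h2π
      · have : j₂ = j₁ := congrArg Prod.snd (h2c.trans h1c.symm)
        omega
      · have : (i, j₁) ∈ π := π.up_left_mem le_rfl (le_of_lt hj) ((mem_cells _).1 h2π)
        rw [← h1c] at hc
        exact hc ((mem_cells _).2 this)
    · rcases h2c with h2c | h2π
      · have hne : (i, j₁) ≠ c := by rintro h; rw [← h] at hc; exact hc h1π
        rw [hfg _ hne, h2c, hfc]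
        have := syt_val_le hg h1π
        omega
      · have hne1 : (i, j₁) ≠ c := by rintro h; rw [← h] at hc; exact hc h1π
        have hne2 : (i, j₂) ≠ c := by rintro h; rw [← h] at hc; exact hc h2π
        rw [hfg _ hne1, hfg _ hne2]
        exact hrow i j₁ j₂ ((mem_cells _).1 h1π) ((mem_cells _).1 h2π) hj
  · intro i₁ i₂ j h1 h2 hi
    have h2c : (i₂, j) = c ∨ (i₂, j) ∈ π.cells := (hmem _).1 ((mem_cells _).2 h2)
    have h1c : (i₁, j) = c ∨ (i₁, j) ∈ π.cells := (hmem _).1 ((mem_cells _).2 h1)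
    rcases h1c with h1c | h1π
    · exfalso
      rcases h2c with h2c | h2π
      · have : i₂ = i₁ := congrArg Prod.fst (h2c.trans h1c.symm)
        omega
      · have : (i₁, j) ∈ π := π.up_left_mem (le_of_lt hi) le_rfl ((mem_cells _).1 h2π)
        rw [← h1c] at hc
        exact hc ((mem_cells _).2 this)
    · rcases h2c with h2c | h2π
      · have hne : (i₁, j) ≠ c := by rintro h; rw [← h] at hc; exact hc h1π
        rw [hfg _ hne, h2c, hfc]
        have := syt_val_le hg h1π
        omega
      · have hne1 : (i₁, j) ≠ c := by rintro h; rw [← h] at hc; exact hc h1π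
        have hne2 : (i₂, j) ≠ c := by rintro h; rw [← h] at hc; exact hc h2π
        rw [hfg _ hne1, hfg _ hne2]
        exact hcol i₁ i₂ j ((mem_cells _).1 h1π) ((mem_cells _).1 h2π) hi

lemma below_of_cells {π ν : YoungDiagram} {c : ℕ × ℕ} (hc : c ∉ π.cells)
    (hins : ν.cells = insert c π.cells) : Below π ν :=
  below_iff_cells.2 ⟨c, hc, hins⟩

lemma addedCell_unique {π ν : YoungDiagram} {c c' : ℕ × ℕ}
    (hc : c ∉ π.cells) (hins : ν.cells = insert c π.cells)
    (hc' : c' ∉ π.cells) (hins' : ν.cells = insert c' π.cells) : c = c' := by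
  have : c ∈ ν.cells := hins ▸ Finset.mem_insert_self _ _
  rw [hins', Finset.mem_insert] at this
  rcases this with h | h
  · exact h
  · exact absurd h hc

set_option maxHeartbeats 2000000 in
noncomputable def popEquiv (n : ℕ) (hn : 1 ≤ n) (R : YoungDiagram → Prop) :
    {p : YoungDiagram × (ℕ × ℕ → ℕ) // p.1.card = n ∧ R p.1 ∧ IsSkewSYT p.1 ⊥ p.2} ≃
    {q : (YoungDiagram × (ℕ × ℕ → ℕ)) × YoungDiagram //
      (q.1.1.card = n - 1 ∧ IsSkewSYT q.1.1 ⊥ q.1.2) ∧ (Below q.1.1 q.2 ∧ R q.2)} where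
  toFun p :=
    let hex := syt_exists_top p.2.2.2 (le_of_le_of_eq hn p.2.1.symm)
    have hmax : ∀ d ∈ p.1.1, hex.choose ≤ d → hex.choose = d :=
      top_maximal p.2.2.2 hex.choose_spec.1 hex.choose_spec.2
    ⟨((eraseCellYD p.1.1 hex.choose hmax, Function.update p.1.2 hex.choose 0), p.1.1),
      ⟨by
        show (eraseCellYD p.1.1 hex.choose hmax).card = n - 1
        have h := (below_eraseCellYD hex.choose_spec.1 hmax).2
        have := p.2.1
        omega,
       pop_syt p.2.2.2 hex.choose_spec.1 hex.choose_spec.2 hmax⟩,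
      below_eraseCellYD hex.choose_spec.1 hmax, p.2.2.1⟩
  invFun q :=
    let hex := below_iff_cells.1 q.2.2.1
    ⟨(q.1.2, Function.update q.1.1.2 hex.choose q.1.2.card),
      by
        show q.1.2.card = n
        have := q.2.2.1.2
        have := q.2.1.1
        omega,
      q.2.2.2,
      push_syt q.2.1.2 hex.choose_spec.1 hex.choose_spec.2⟩
  left_inv := by
    rintro ⟨⟨ν, f⟩, hcard, hR, hf⟩
    apply Subtype.ext
    simp only
    let hex := syt_exists_top hf (hcard ▸ hn)
    set c := hex.choose with hcdef
    have hcmem := hex.choose_spec.1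
    have hcval := hex.choose_spec.2
    have hmax : ∀ d ∈ ν, c ≤ d → c = d := top_maximal hf hcmem hcval
    -- the added-cell choice in invFun
    set B := below_eraseCellYD hcmem hmax with hBdef
    let hex2 := below_iff_cells.1 B
    have hc2 : hex2.choose = c := by
      apply addedCell_unique hex2.choose_spec.1 hex2.choose_spec.2
      · show c ∉ (eraseCellYD ν c hmax).cells
        rw [mem_eraseCellYD]
        simp
      · show ν.cells = insert c (eraseCellYD ν c hmax).cells
        show ν.cells = insert c (ν.cells.erase c)
        rw [Finset.insert_erase hcmem]
    refine Prod.ext rfl ?_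
    show Function.update (Function.update f c 0) hex2.choose ν.card = f
    rw [hc2]
    funext x
    rcases eq_or_ne x c with rfl | hxc
    · rw [Function.update_self]
      exact hcval.symm
    · rw [Function.update_of_ne hxc, Function.update_of_ne hxc]
  right_inv := by
    rintro ⟨⟨⟨π, g⟩, ν⟩, ⟨hπcard, hg⟩, hB, hR⟩
    apply Subtype.ext
    simp only
    let hex := below_iff_cells.1 hB
    set c := hex.choose with hcdef
    have hcnot := hex.choose_spec.1
    have hcins := hex.choose_spec.2
    set f := Function.update g c ν.card with hfdef
    have hf : IsSkewSYT ν ⊥ f := push_syt hg hcnot hcins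
    -- the top-cell choice in toFun
    let hex2 := syt_exists_top hf (show 1 ≤ ν.card from by have h : ν.card = π.card + 1 := hB.2; omega)
    have hfc : f c = ν.card := by rw [hfdef]; simp
    have hcmem : c ∈ ν.cells := hcins ▸ Finset.mem_insert_self _ _
    have hc2 : hex2.choose = c := by
      apply (syt_iff.1 hf).2.1.injOn (by exact_mod_cast hex2.choose_spec.1)
        (by exact_mod_cast hcmem)
      rw [hex2.choose_spec.2, hfc]
    have hmax2 : ∀ d ∈ ν, hex2.choose ≤ d → hex2.choose = d :=
      top_maximal hf hex2.choose_spec.1 hex2.choose_spec.2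
    refine Prod.ext (Prod.ext ?_ ?_) rfl
    · show eraseCellYD ν hex2.choose hmax2 = π
      ext x
      rw [mem_eraseCellYD, hc2]
      constructor
      · rintro ⟨hx, hxc⟩
        rw [hcins, Finset.mem_insert] at hx
        rcases hx with h | h
        · exact absurd h hxc
        · exact h
      · intro hx
        refine ⟨hcins ▸ Finset.mem_insert_of_mem hx, ?_⟩
        rintro rfl
        exact hcnot hx
    · show Function.update f hex2.choose 0 = g
      rw [hc2, hfdef, Function.update_idem]
      have hgc : g c = 0 := (syt_iff.1 hg).1 c hcnot
      rw [← hgc, Function.update_eq_self]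

-- new:

lemma yd_ext_rowLen {μ ν : YoungDiagram} (h : ∀ i, μ.rowLen i = ν.rowLen i) : μ = ν := by
  ext ⟨a, b⟩
  simp only [mem_cells, mem_iff_lt_rowLen, h]

def QProp (π lam : YoungDiagram) (i : ℕ) : Prop :=
  (i = 0 ∨ π.rowLen i < π.rowLen (i - 1)) ∧
  (∀ t, lam.rowLen t ≤ π.rowLen t + (if t = i then 1 else 0)) ∧
  (∀ t, π.rowLen (t + 1) + (if t + 1 = i then 1 else 0) ≤ lam.rowLen t)

def RProp (π lam : YoungDiagram) (j : ℕ) : Prop :=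
  lam.rowLen (j + 1) < lam.rowLen j ∧
  (∀ t, lam.rowLen t - (if t = j then 1 else 0) ≤ π.rowLen t) ∧
  (∀ t, π.rowLen (t + 1) ≤ lam.rowLen t - (if t = j then 1 else 0))

def addRowYD (π : YoungDiagram) (i : ℕ) (h : i = 0 ∨ π.rowLen i < π.rowLen (i - 1)) :
    YoungDiagram :=
  ⟨insert (i, π.rowLen i) π.cells, by
    intro x y hyx hx
    simp only [Finset.coe_insert, Set.mem_insert_iff] at hx ⊢
    rcases hx with rfl | hx
    · obtain ⟨a, b⟩ := y
      have h1 : a ≤ i := hyx.1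
      have h2 : b ≤ π.rowLen i := hyx.2
      by_cases hai : a = i
      · subst hai
        rcases Nat.lt_or_ge b (π.rowLen a) with hb | hb
        · exact Or.inr ((mem_cells _).2 (mem_iff_lt_rowLen.2 hb))
        · left
          have : b = π.rowLen a := by omega
          rw [this]
      · right
        have hai' : a < i := by omega
        have hle : π.rowLen (i - 1) ≤ π.rowLen a := π.rowLen_anti _ _ (by omega)
        have hlt : π.rowLen i < π.rowLen (i - 1) := by
          rcases h with h | h
          · omega
          · exact h
        exact (mem_cells _).2 (mem_iff_lt_rowLen.2 (by omega))
    · exact Or.inr (π.isLowerSet hyx hx)⟩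

lemma mem_addRowYD {π : YoungDiagram} {i : ℕ} {h} {x : ℕ × ℕ} :
    x ∈ (addRowYD π i h).cells ↔ x = (i, π.rowLen i) ∨ x ∈ π.cells := Finset.mem_insert

lemma rowLen_addRowYD {π : YoungDiagram} {i : ℕ} {h} (t : ℕ) :
    (addRowYD π i h).rowLen t = π.rowLen t + (if t = i then 1 else 0) := by
  apply rowLen_eq_of_forall_mem_iff
  intro j
  rw [← mem_cells, mem_addRowYD, mem_cells, mem_iff_lt_rowLen, Prod.mk.injEq]
  split_ifs with hti
  · subst hti
    simp only [true_and]
    omega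
  · constructor
    · rintro (⟨h1, h2⟩ | h1)
      · exact absurd h1 hti
      · omega
    · intro h1; exact Or.inr (by omega)

lemma below_addRowYD {π : YoungDiagram} {i : ℕ} {h} : Below π (addRowYD π i h) := by
  rw [below_iff_cells]
  exact ⟨(i, π.rowLen i), by rw [mem_cells, mem_iff_lt_rowLen]; omega, rfl⟩

def removeRowYD (lam : YoungDiagram) (j : ℕ) (h : lam.rowLen (j + 1) < lam.rowLen j) :
    YoungDiagram :=
  ⟨lam.cells.erase (j, lam.rowLen j - 1), by
    intro x y hyx hx
    simp only [Finset.coe_erase, Set.mem_diff, Set.mem_singleton_iff] at hx ⊢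
    obtain ⟨hx1, hx2⟩ := hx
    refine ⟨lam.isLowerSet hyx hx1, ?_⟩
    rintro rfl
    obtain ⟨a, b⟩ := x
    have h1 : j ≤ a := hyx.1
    have h2 : lam.rowLen j - 1 ≤ b := hyx.2
    have hmem : b < lam.rowLen a := mem_iff_lt_rowLen.1 ((mem_cells _).1 hx1)
    by_cases haj : a = j
    · subst haj
      apply hx2
      have : b = lam.rowLen a - 1 := by omega
      rw [this]
    · have : lam.rowLen a ≤ lam.rowLen (j + 1) := lam.rowLen_anti _ _ (by omega)
      omega⟩

lemma mem_removeRowYD {lam : YoungDiagram} {j : ℕ} {h} {x : ℕ × ℕ} :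
    x ∈ (removeRowYD lam j h).cells ↔ x ≠ (j, lam.rowLen j - 1) ∧ x ∈ lam.cells :=
  Finset.mem_erase

lemma rowLen_removeRowYD {lam : YoungDiagram} {j : ℕ} {h} (t : ℕ) :
    (removeRowYD lam j h).rowLen t = lam.rowLen t - (if t = j then 1 else 0) := by
  apply rowLen_eq_of_forall_mem_iff
  intro b
  rw [← mem_cells, mem_removeRowYD, mem_cells, mem_iff_lt_rowLen]
  simp only [Ne, Prod.mk.injEq, not_and_or]
  split_ifs with htj
  · subst htj
    simp only [not_true, false_or]
    omega
  · constructor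
    · rintro ⟨-, h2⟩; omega
    · intro h1; exact ⟨Or.inl htj, h1⟩

lemma below_removeRowYD {lam : YoungDiagram} {j : ℕ} {h} : Below (removeRowYD lam j h) lam := by
  rw [below_iff_cells]
  refine ⟨(j, lam.rowLen j - 1), by simp [removeRowYD], ?_⟩
  show lam.cells = insert _ (lam.cells.erase _)
  rw [Finset.insert_erase]
  rw [mem_cells, mem_iff_lt_rowLen]
  omega

noncomputable def equivQ (π lam : YoungDiagram) :
    {ν : YoungDiagram // Below π ν ∧ IsHorizontalStrip ν lam} ≃ {i : ℕ // QProp π lam i} where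
  toFun p := by
    refine ⟨(below_iff_rowLen.1 p.2.1).choose, ?_⟩
    obtain ⟨h1, h2⟩ := (below_iff_rowLen.1 p.2.1).choose_spec
    set i := (below_iff_rowLen.1 p.2.1).choose
    obtain ⟨hs1, hs2⟩ := hs_iff.1 p.2.2
    refine ⟨?_, ?_, ?_⟩
    · rcases Nat.eq_zero_or_pos i with h0 | h0
      · exact Or.inl h0
      · right
        have ha := p.1.rowLen_anti (i - 1) i (by omega)
        have hb := h2 (i - 1) (by omega)
        omega
    · intro t
      have := hs1 t
      split_ifs with hti
      · subst hti; omega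
      · have := h2 t hti; omega
    · intro t
      have := hs2 t
      split_ifs with hti
      · rw [← hti] at h1
        omega
      · have := h2 (t + 1) hti; omega
  invFun q := ⟨addRowYD π q.1 q.2.1, below_addRowYD, by
    rw [hs_iff]
    constructor
    · intro t
      rw [rowLen_addRowYD t]
      exact q.2.2.1 t
    · intro t
      rw [rowLen_addRowYD (t + 1)]
      exact q.2.2.2 t⟩
  left_inv := by
    rintro ⟨ν, hB, hs⟩
    apply Subtype.ext
    simp only
    obtain ⟨h1, h2⟩ := (below_iff_rowLen.1 hB).choose_spec
    apply yd_ext_rowLen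
    intro t
    rw [rowLen_addRowYD t]
    by_cases hti : t = (below_iff_rowLen.1 hB).choose
    · subst hti; simp [h1]
    · simp [hti, h2 t hti]
  right_inv := by
    rintro ⟨i, hQ⟩
    apply Subtype.ext
    simp only
    set ν := addRowYD π i hQ.1 with hν
    obtain ⟨h1, h2⟩ := (below_iff_rowLen.1 (below_addRowYD (h := hQ.1))).choose_spec
    set i' := (below_iff_rowLen.1 (below_addRowYD (h := hQ.1))).choose
    by_contra hne
    have hr := rowLen_addRowYD (π := π) (i := i) (h := hQ.1) i'
    rw [if_neg hne] at hr
    rw [hr] at h1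
    omega

noncomputable def equivR (π lam : YoungDiagram) :
    {μ : YoungDiagram // Below μ lam ∧ IsHorizontalStrip π μ} ≃ {j : ℕ // RProp π lam j} where
  toFun p := by
    refine ⟨(below_iff_rowLen.1 p.2.1).choose, ?_⟩
    obtain ⟨h1, h2⟩ := (below_iff_rowLen.1 p.2.1).choose_spec
    set j := (below_iff_rowLen.1 p.2.1).choose
    obtain ⟨hs1, hs2⟩ := hs_iff.1 p.2.2
    refine ⟨?_, ?_, ?_⟩
    · have ha := p.1.rowLen_anti j (j + 1) (by omega)
      have hb := h2 (j + 1) (by omega)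
      omega
    · intro t
      have := hs1 t
      split_ifs with htj
      · subst htj; omega
      · have := h2 t htj; omega
    · intro t
      have := hs2 t
      split_ifs with htj
      · subst htj; omega
      · have := h2 t htj; omega
  invFun q := ⟨removeRowYD lam q.1 q.2.1, below_removeRowYD, by
    rw [hs_iff]
    constructor
    · intro t
      rw [rowLen_removeRowYD t]
      exact q.2.2.1 t
    · intro t
      rw [rowLen_removeRowYD t]
      exact q.2.2.2 t⟩
  left_inv := by
    rintro ⟨μ, hB, hs⟩
    apply Subtype.ext
    simp only
    obtain ⟨h1, h2⟩ := (below_iff_rowLen.1 hB).choose_spec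
    apply yd_ext_rowLen
    intro t
    rw [rowLen_removeRowYD t]
    by_cases htj : t = (below_iff_rowLen.1 hB).choose
    · rw [if_pos htj, htj]; omega
    · simp [htj, (h2 t htj).symm]
  right_inv := by
    rintro ⟨j, hR⟩
    apply Subtype.ext
    simp only
    obtain ⟨h1, h2⟩ := (below_iff_rowLen.1 (below_removeRowYD (h := hR.1))).choose_spec
    set j' := (below_iff_rowLen.1 (below_removeRowYD (h := hR.1))).choose
    by_contra hne
    have hr := rowLen_removeRowYD (lam := lam) (j := j) (h := hR.1) j'
    rw [if_neg hne] at hr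
    rw [hr] at h1
    omega

section CLemmas
variable {π lam : YoungDiagram}

def HProp (π lam : YoungDiagram) : Prop :=
  (∀ t, lam.rowLen t ≤ π.rowLen t) ∧ (∀ t, π.rowLen (t + 1) ≤ lam.rowLen t)

lemma C1 (H : HProp π lam) : QProp π lam 0 := by
  refine ⟨Or.inl rfl, fun t => ?_, fun t => ?_⟩
  · have := H.1 t
    by_cases h : t = 0
    · rw [if_pos h]; omega
    · rw [if_neg h]; omega
  · have := H.2 t
    rw [if_neg (by omega : ¬ t + 1 = 0)]
    omega

lemma C2 (H : HProp π lam) (i : ℕ) : QProp π lam (i + 1) ↔ RProp π lam i := by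
  constructor
  · rintro ⟨-, hQ2, hQ3⟩
    have key : π.rowLen (i + 1) + 1 ≤ lam.rowLen i := by
      have := hQ3 i
      rw [if_pos rfl] at this
      exact this
    refine ⟨?_, fun t => ?_, fun t => ?_⟩
    · have := H.1 (i + 1); omega
    · have := H.1 t
      by_cases h : t = i
      · rw [if_pos h]; omega
      · rw [if_neg h]; omega
    · by_cases h : t = i
      · rw [if_pos h, h]; omega
      · rw [if_neg h]; have := H.2 t; omega
  · rintro ⟨hrem, hR2, hR3⟩
    have key2 : π.rowLen (i + 1) ≤ lam.rowLen i - 1 := by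
      have := hR3 i
      rw [if_pos rfl] at this
      exact this
    refine ⟨Or.inr ?_, fun t => ?_, fun t => ?_⟩
    · have h1 : i + 1 - 1 = i := by omega
      rw [h1]
      have := H.1 i
      omega
    · have := H.1 t
      by_cases h : t = i + 1
      · rw [if_pos h]; omega
      · rw [if_neg h]; omega
    · by_cases h : t + 1 = i + 1
      · rw [if_pos h]
        have ht : t = i := by omega
        subst ht
        omega
      · rw [if_neg h]; have := H.2 t; omega

lemma not_H_aux (hQ3' : ∀ t, π.rowLen (t + 1) ≤ lam.rowLen t) (hH : ¬ HProp π lam) :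
    ∃ t, π.rowLen t < lam.rowLen t := by
  by_contra hc
  push_neg at hc
  exact hH ⟨fun t => hc t, hQ3'⟩

lemma C3a {i : ℕ} (hQ : QProp π lam i) (hH : ¬ HProp π lam) : RProp π lam i := by
  obtain ⟨hadd, hQ2, hQ3⟩ := hQ
  have hQ3' : ∀ t, π.rowLen (t + 1) ≤ lam.rowLen t := by
    intro t
    have := hQ3 t
    by_cases h : t + 1 = i
    · rw [if_pos h] at this; omega
    · rw [if_neg h] at this; omega
  obtain ⟨t0, ht0⟩ := not_H_aux hQ3' hH
  have ht0i : t0 = i ∧ lam.rowLen i = π.rowLen i + 1 := by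
    have := hQ2 t0
    by_cases h : t0 = i
    · subst h; rw [if_pos rfl] at this; exact ⟨rfl, by omega⟩
    · rw [if_neg h] at this; omega
  obtain ⟨rfl, hli⟩ := ht0i
  refine ⟨?_, fun t => ?_, fun t => ?_⟩
  · have h1 := hQ2 (t0 + 1)
    rw [if_neg (by omega)] at h1
    have h2 := π.rowLen_anti t0 (t0 + 1) (by omega)
    omega
  · have := hQ2 t
    by_cases h : t = t0
    · subst h; rw [if_pos rfl] at this ⊢; omega
    · rw [if_neg h] at this ⊢; omega
  · by_cases h : t = t0
    · subst h
      rw [if_pos rfl]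
      have := π.rowLen_anti t (t + 1) (by omega)
      omega
    · rw [if_neg h]
      have := hQ3' t
      omega
lemma C3b {i : ℕ} (hR : RProp π lam i) (hH : ¬ HProp π lam) : QProp π lam i := by
  obtain ⟨hrem, hR2, hR3⟩ := hR
  have hlp : ∀ t, t ≠ i → lam.rowLen t ≤ π.rowLen t := by
    intro t ht
    have := hR2 t
    rw [if_neg ht] at this
    omega
  have hli : lam.rowLen i - 1 ≤ π.rowLen i := by
    have := hR2 i
    rw [if_pos rfl] at this
    omega
  have hthi : π.rowLen (i + 1) ≤ lam.rowLen i - 1 := by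
    have := hR3 i
    rw [if_pos rfl] at this
    omega
  have hth : ∀ t, π.rowLen (t + 1) ≤ lam.rowLen t := by
    intro t
    have := hR3 t
    by_cases h : t = i
    · rw [if_pos h] at this
      have h1 := lam.rowLen_anti (t + 1) (t + 1) le_rfl
      omega
    · rw [if_neg h] at this; omega
  obtain ⟨t0, ht0⟩ := not_H_aux hth hH
  have ht0i : t0 = i := by
    by_contra hne
    have := hlp t0 hne
    omega
  subst ht0i
  have hli2 : lam.rowLen t0 = π.rowLen t0 + 1 := by omega
  refine ⟨?_, fun t => ?_, fun t => ?_⟩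
  · rcases Nat.eq_zero_or_pos t0 with h0 | h0
    · exact Or.inl h0
    · right
      have h1 := lam.rowLen_anti (t0 - 1) t0 (by omega)
      have h2 := hlp (t0 - 1) (by omega)
      omega
  · by_cases h : t = t0
    · rw [if_pos h, h]; omega
    · rw [if_neg h]; have := hlp t h; omega
  · by_cases h : t + 1 = t0
    · rw [if_pos h, h]
      have h1 := lam.rowLen_anti t t0 (by omega)
      omega
    · rw [if_neg h]
      by_cases hti : t = t0
      · subst hti
        omega
      · have := hth t
        omega

end CLemmas

lemma finite_nat_subtype {S : ℕ → Prop} (N : ℕ) (h : ∀ i, S i → i ≤ N) :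
    Finite {i : ℕ // S i} := by
  apply Finite.of_injective (β := Fin (N + 1)) (fun x => ⟨x.1, by have := h x.1 x.2; omega⟩)
  rintro ⟨i, hi⟩ ⟨j, hj⟩ hij
  simpa [Fin.ext_iff] using hij

lemma rowLen_pos_fst_lt_card {μ : YoungDiagram} {i : ℕ} (h : 0 < μ.rowLen i) : i < μ.card :=
  YoungDiagram.fst_lt_card (mem_iff_lt_rowLen.2 (by omega : (0:ℕ) < μ.rowLen i))

instance finQ (π lam : YoungDiagram) : Finite {i : ℕ // QProp π lam i} := by
  apply finite_nat_subtype π.card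
  rintro i ⟨h1, -, -⟩
  rcases h1 with rfl | h1
  · omega
  · have : i - 1 < π.card := rowLen_pos_fst_lt_card (by omega)
    rcases Nat.eq_zero_or_pos i with h0 | h0
    · omega
    · omega

instance finR (π lam : YoungDiagram) : Finite {j : ℕ // RProp π lam j} := by
  apply finite_nat_subtype lam.card
  rintro j ⟨h1, -, -⟩
  exact le_of_lt (rowLen_pos_fst_lt_card (by omega))

open Classical in
lemma card_Q_eq (π lam : YoungDiagram) :
    Nat.card {i : ℕ // QProp π lam i} =
      (if IsHorizontalStrip π lam then 1 else 0) + Nat.card {j : ℕ // RProp π lam j} := by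
  by_cases hH : IsHorizontalStrip π lam
  · have H : HProp π lam := hs_iff.1 hH
    have e : {i : ℕ // QProp π lam i} ≃ (PUnit.{1} ⊕ {j : ℕ // RProp π lam j}) :=
      { toFun := fun x => match x with
          | ⟨0, _⟩ => Sum.inl PUnit.unit
          | ⟨j + 1, hQ⟩ => Sum.inr ⟨j, (C2 H j).1 hQ⟩
        invFun := fun s => match s with
          | Sum.inl _ => ⟨0, C1 H⟩
          | Sum.inr ⟨j, hR⟩ => ⟨j + 1, (C2 H j).2 hR⟩
        left_inv := by rintro ⟨_ | j, h⟩ <;> rfl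
        right_inv := by rintro (⟨⟩ | ⟨j, h⟩) <;> rfl }
    rw [Nat.card_congr e, Nat.card_sum, if_pos hH]
    simp
  · have hH' : ¬ HProp π lam := fun h => hH (hs_iff.2 h)
    have e : {i : ℕ // QProp π lam i} ≃ {j : ℕ // RProp π lam j} :=
      { toFun := fun x => ⟨x.1, C3a x.2 hH'⟩
        invFun := fun x => ⟨x.1, C3b x.2 hH'⟩
        left_inv := by rintro ⟨i, h⟩; rfl
        right_inv := by rintro ⟨j, h⟩; rfl }
    rw [Nat.card_congr e, if_neg hH]
    omega

open Classical in
lemma LB (π lam : YoungDiagram) :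
    Nat.card {ν : YoungDiagram // Below π ν ∧ IsHorizontalStrip ν lam} =
      (if IsHorizontalStrip π lam then 1 else 0) +
        Nat.card {μ : YoungDiagram // Below μ lam ∧ IsHorizontalStrip π μ} := by
  rw [Nat.card_congr (equivQ π lam), Nat.card_congr (equivR π lam), card_Q_eq]

-- generic equivs

def subtypeProdSigma {α β : Type*} (P : α → Prop) (T : α → β → Prop) :
    {x : α × β // P x.1 ∧ T x.1 x.2} ≃ Σ a : {a : α // P a}, {b : β // T a.1 b} where
  toFun x := ⟨⟨x.1.1, x.2.1⟩, ⟨x.1.2, x.2.2⟩⟩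
  invFun s := ⟨(s.1.1, s.2.1), s.1.2, s.2.2⟩
  left_inv := fun _ => rfl
  right_inv := fun _ => rfl

def subtypeProdSigma' {α β : Type*} (P : α → Prop) (Q : β → Prop) (T : α → β → Prop) :
    {x : α × β // P x.1 ∧ Q x.2 ∧ T x.1 x.2} ≃ Σ b : {b : β // Q b}, {a : α // P a ∧ T a b.1} where
  toFun x := ⟨⟨x.1.2, x.2.2.1⟩, ⟨x.1.1, x.2.1, x.2.2.2⟩⟩
  invFun s := ⟨(s.2.1, s.1.1), s.2.2.1, s.1.2, s.2.2.2⟩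
  left_inv := fun _ => rfl
  right_inv := fun _ => rfl

lemma nat_card_sigma {ι : Type*} [Fintype ι] (F : ι → Type*) [∀ i, Finite (F i)] :
    Nat.card (Σ i, F i) = ∑ i, Nat.card (F i) := by
  letI : ∀ i, Fintype (F i) := fun i => Fintype.ofFinite _
  rw [Nat.card_eq_fintype_card, Fintype.card_sigma]
  exact Finset.sum_congr rfl fun i _ => (Nat.card_eq_fintype_card).symm

-- small facts

lemma card_mono {μ ν : YoungDiagram} (h : μ ≤ ν) : μ.card ≤ ν.card :=
  Finset.card_le_card (cells_subset_iff.2 h)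

lemma card_zero_bot {ν : YoungDiagram} (h : ν.card = 0) : ν = ⊥ := by
  have : ν.cells = ∅ := Finset.card_eq_zero.1 h
  ext c
  show c ∈ ν.cells ↔ c ∈ (⊥:YoungDiagram).cells
  rw [this, cells_bot]

lemma syt_bot (f : ℕ × ℕ → ℕ) : IsSkewSYT ⊥ ⊥ f ↔ f = fun _ => 0 := by
  rw [syt_iff]
  constructor
  · intro h
    funext c
    exact h.1 c (by simp [cells_bot])
  · rintro rfl
    refine ⟨fun c _ => rfl, ?_, fun i j₁ j₂ h1 => by simp [notMem_bot] at h1, fun i₁ i₂ j h1 => by simp [notMem_bot] at h1⟩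
    have h0 : (⊥ : YoungDiagram).card = 0 := by simp [YoungDiagram.card, cells_bot]
    rw [h0, cells_bot]
    simp only [Finset.coe_empty]
    rw [Finset.Icc_eq_empty (by omega)]
    simp only [Finset.coe_empty]
    exact Set.bijOn_empty_iff_left.2 rfl

-- more helpers

def sigmaPLiftEquiv {α : Type*} (P Q : α → Prop) :
    (Σ a : {a : α // P a}, PLift (Q a.1)) ≃ {a : α // P a ∧ Q a} where
  toFun s := ⟨s.1.1, s.1.2, s.2.down⟩
  invFun x := ⟨⟨x.1, x.2.1⟩, ⟨x.2.2⟩⟩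
  left_inv := fun _ => rfl
  right_inv := fun _ => rfl

open Classical in
lemma nat_card_plift (p : Prop) : Nat.card (PLift p) = if p then 1 else 0 := by
  by_cases h : p
  · rw [if_pos h]
    have : Unique (PLift p) := ⟨⟨⟨h⟩⟩, fun a => by cases a; rfl⟩
    exact Nat.card_unique
  · rw [if_neg h]
    have : IsEmpty (PLift p) := ⟨fun a => h a.down⟩
    exact Nat.card_of_isEmpty

lemma finite_syt (lam : YoungDiagram) : Finite {f : ℕ × ℕ → ℕ // IsSkewSYT lam ⊥ f} := by
  have h1 : Finite {p : YoungDiagram × (ℕ × ℕ → ℕ) //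
      p.1.card = lam.card ∧ IsSkewSYT p.1 ⊥ p.2} :=
    finite_pairs lam.card (fun ν f => ν.card = lam.card ∧ IsSkewSYT ν ⊥ f) (fun ν f h => h)
  apply Finite.of_injective
    (β := {p : YoungDiagram × (ℕ × ℕ → ℕ) // p.1.card = lam.card ∧ IsSkewSYT p.1 ⊥ p.2})
    (fun f => ⟨(lam, f.1), rfl, f.2⟩)
  rintro ⟨f, hf⟩ ⟨g, hg⟩ h
  have : (lam, f) = (lam, g) := congrArg Subtype.val h
  exact Subtype.ext (congrArg Prod.snd this)

lemma bot_card : (⊥ : YoungDiagram).card = 0 := by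
  simp [YoungDiagram.card, cells_bot]

lemma S_bot : Nat.card {f : ℕ × ℕ → ℕ // IsSkewSYT ⊥ ⊥ f} = 1 := by
  have e : {f : ℕ × ℕ → ℕ // IsSkewSYT ⊥ ⊥ f} ≃ PUnit.{1} :=
    { toFun := fun _ => PUnit.unit
      invFun := fun _ => ⟨fun _ => 0, (syt_bot _).2 rfl⟩
      left_inv := fun f => by
        apply Subtype.ext
        exact ((syt_bot _).1 f.2).symm
      right_inv := fun _ => rfl }
  rw [Nat.card_congr e]
  simp

lemma branching (lam : YoungDiagram) (h : 1 ≤ lam.card) :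
    Nat.card {f : ℕ × ℕ → ℕ // IsSkewSYT lam ⊥ f} =
      Nat.card {pg : YoungDiagram × (ℕ × ℕ → ℕ) //
        Below pg.1 lam ∧ IsSkewSYT pg.1 ⊥ pg.2} := by
  have e1 : {f : ℕ × ℕ → ℕ // IsSkewSYT lam ⊥ f} ≃
      {p : YoungDiagram × (ℕ × ℕ → ℕ) //
        p.1.card = lam.card ∧ p.1 = lam ∧ IsSkewSYT p.1 ⊥ p.2} :=
    { toFun := fun f => ⟨(lam, f.1), rfl, rfl, f.2⟩
      invFun := fun p => ⟨p.1.2, by have h2 := p.2.2.2; rwa [p.2.2.1] at h2⟩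
      left_inv := fun f => rfl
      right_inv := fun p => by
        obtain ⟨⟨ν, f⟩, hcard, hν, hf⟩ := p
        apply Subtype.ext
        show (lam, f) = (ν, f)
        rw [show ν = lam from hν] }
  have e2 := popEquiv lam.card h (fun ν => ν = lam)
  have e3 : {q : (YoungDiagram × (ℕ × ℕ → ℕ)) × YoungDiagram //
      (q.1.1.card = lam.card - 1 ∧ IsSkewSYT q.1.1 ⊥ q.1.2) ∧ (Below q.1.1 q.2 ∧ q.2 = lam)} ≃
      {pg : YoungDiagram × (ℕ × ℕ → ℕ) // Below pg.1 lam ∧ IsSkewSYT pg.1 ⊥ pg.2} :=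
    { toFun := fun q => ⟨q.1.1, by have h2 := q.2.2.1; rwa [q.2.2.2] at h2, q.2.1.2⟩
      invFun := fun pg => ⟨(pg.1, lam),
        ⟨by show pg.1.1.card = lam.card - 1; have h2 := pg.2.1.2; omega, pg.2.2⟩, pg.2.1, rfl⟩
      left_inv := fun q => by
        obtain ⟨⟨pg, ν⟩, ⟨hcard, hsyt⟩, hB, hν⟩ := q
        apply Subtype.ext
        show ((pg, lam) : (YoungDiagram × (ℕ × ℕ → ℕ)) × YoungDiagram) = (pg, ν)
        rw [show ν = lam from hν]
      right_inv := fun pg => rfl }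
  rw [Nat.card_congr ((e1.trans e2).trans e3)]

lemma main_count : ∀ (r : ℕ) (lam : YoungDiagram),
    Nat.card {p : YoungDiagram × (ℕ × ℕ → ℕ) //
      p.1.card = r ∧ IsHorizontalStrip p.1 lam ∧ IsSkewSYT p.1 ⊥ p.2} =
    Nat.choose r lam.card * Nat.card {f : ℕ × ℕ → ℕ // IsSkewSYT lam ⊥ f} := by
  intro r
  induction r with
  | zero =>
    intro lam
    by_cases hm : lam.card = 0
    · have hbot : lam = ⊥ := card_zero_bot hm
      subst hbot
      rw [hm, Nat.choose_self, S_bot]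
      have e : {p : YoungDiagram × (ℕ × ℕ → ℕ) //
          p.1.card = 0 ∧ IsHorizontalStrip p.1 ⊥ ∧ IsSkewSYT p.1 ⊥ p.2} ≃ PUnit.{1} :=
        { toFun := fun _ => PUnit.unit
          invFun := fun _ => ⟨(⊥, fun _ => 0), bot_card,
            ⟨bot_le, fun i₁ i₂ j h1 h2 => by
              rw [cells_bot] at h1
              simp at h1⟩, (syt_bot _).2 rfl⟩
          left_inv := fun p => by
            obtain ⟨⟨ν, f⟩, hcard, hhs, hf⟩ := p
            have hν : ν = ⊥ := card_zero_bot hcard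
            subst hν
            apply Subtype.ext
            show ((⊥ : YoungDiagram), fun _ => (0:ℕ)) = (⊥, f)
            rw [show f = fun _ => (0:ℕ) from (syt_bot f).1 hf]
          right_inv := fun _ => rfl }
      rw [Nat.card_congr e]
      simp
    · have he : IsEmpty {p : YoungDiagram × (ℕ × ℕ → ℕ) //
          p.1.card = 0 ∧ IsHorizontalStrip p.1 lam ∧ IsSkewSYT p.1 ⊥ p.2} := by
        refine ⟨fun p => ?_⟩
        have h1 := card_mono p.2.2.1.1
        have h2 := p.2.1
        omega
      rw [Nat.card_of_isEmpty, Nat.choose_eq_zero_of_lt (by omega), zero_mul]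
  | succ r IH =>
    intro lam
    haveI instBase : Finite {pg : YoungDiagram × (ℕ × ℕ → ℕ) //
        pg.1.card = r ∧ IsSkewSYT pg.1 ⊥ pg.2} :=
      finite_pairs r (fun ν f => ν.card = r ∧ IsSkewSYT ν ⊥ f) (fun ν f h => h)
    letI instBaseF : Fintype {pg : YoungDiagram × (ℕ × ℕ → ℕ) //
        pg.1.card = r ∧ IsSkewSYT pg.1 ⊥ pg.2} := Fintype.ofFinite _
    haveI instFib1 : ∀ x : {pg : YoungDiagram × (ℕ × ℕ → ℕ) //
        pg.1.card = r ∧ IsSkewSYT pg.1 ⊥ pg.2},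
        Finite {ν : YoungDiagram // Below x.1.1 ν ∧ IsHorizontalStrip ν lam} :=
      fun x => finite_diagrams _ (x.1.1.card + 1) (fun ν h => le_of_eq h.1.2)
    haveI instFib2 : ∀ x : {pg : YoungDiagram × (ℕ × ℕ → ℕ) //
        pg.1.card = r ∧ IsSkewSYT pg.1 ⊥ pg.2},
        Finite {μ : YoungDiagram // Below μ lam ∧ IsHorizontalStrip x.1.1 μ} :=
      fun x => finite_diagrams _ lam.card (fun μ h => by have := h.1.2; omega)
    have e1 := popEquiv (r + 1) (by omega) (fun ν => IsHorizontalStrip ν lam)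
    have e2 : {q : (YoungDiagram × (ℕ × ℕ → ℕ)) × YoungDiagram //
        (q.1.1.card = r + 1 - 1 ∧ IsSkewSYT q.1.1 ⊥ q.1.2) ∧
          (Below q.1.1 q.2 ∧ IsHorizontalStrip q.2 lam)} ≃
        Σ x : {pg : YoungDiagram × (ℕ × ℕ → ℕ) // pg.1.card = r ∧ IsSkewSYT pg.1 ⊥ pg.2},
          {ν : YoungDiagram // Below x.1.1 ν ∧ IsHorizontalStrip ν lam} :=
      subtypeProdSigma (fun pg : YoungDiagram × (ℕ × ℕ → ℕ) =>
          pg.1.card = r ∧ IsSkewSYT pg.1 ⊥ pg.2)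
        (fun pg ν => Below pg.1 ν ∧ IsHorizontalStrip ν lam)
    rw [Nat.card_congr (e1.trans e2), nat_card_sigma]
    have hsplit : (∑ x : {pg : YoungDiagram × (ℕ × ℕ → ℕ) //
          pg.1.card = r ∧ IsSkewSYT pg.1 ⊥ pg.2},
          Nat.card {ν : YoungDiagram // Below x.1.1 ν ∧ IsHorizontalStrip ν lam}) =
        (∑ x : {pg : YoungDiagram × (ℕ × ℕ → ℕ) //
          pg.1.card = r ∧ IsSkewSYT pg.1 ⊥ pg.2},
          Nat.card (PLift (IsHorizontalStrip x.1.1 lam))) +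
        (∑ x : {pg : YoungDiagram × (ℕ × ℕ → ℕ) //
          pg.1.card = r ∧ IsSkewSYT pg.1 ⊥ pg.2},
          Nat.card {μ : YoungDiagram // Below μ lam ∧ IsHorizontalStrip x.1.1 μ}) := by
      rw [← Finset.sum_add_distrib]
      exact Finset.sum_congr rfl (fun x _ => by rw [LB, nat_card_plift])
    rw [hsplit]
    have hA : (∑ x : {pg : YoungDiagram × (ℕ × ℕ → ℕ) //
          pg.1.card = r ∧ IsSkewSYT pg.1 ⊥ pg.2},
          Nat.card (PLift (IsHorizontalStrip x.1.1 lam))) =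
        Nat.choose r lam.card * Nat.card {f : ℕ × ℕ → ℕ // IsSkewSYT lam ⊥ f} := by
      rw [← nat_card_sigma]
      rw [Nat.card_congr ((sigmaPLiftEquiv
        (fun pg : YoungDiagram × (ℕ × ℕ → ℕ) => pg.1.card = r ∧ IsSkewSYT pg.1 ⊥ pg.2)
        (fun pg => IsHorizontalStrip pg.1 lam)).trans
        (Equiv.subtypeEquivRight (q := fun pg : YoungDiagram × (ℕ × ℕ → ℕ) =>
          pg.1.card = r ∧ IsHorizontalStrip pg.1 lam ∧ IsSkewSYT pg.1 ⊥ pg.2)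
          (fun pg => by tauto)))]
      exact IH lam
    rw [hA]
    haveI instCov : Finite {μ : YoungDiagram // Below μ lam} :=
      finite_diagrams _ lam.card (fun μ h => by have := h.2; omega)
    letI instCovF : Fintype {μ : YoungDiagram // Below μ lam} := Fintype.ofFinite _
    haveI instFib3 : ∀ μ : {μ : YoungDiagram // Below μ lam},
        Finite {pg : YoungDiagram × (ℕ × ℕ → ℕ) //
          (pg.1.card = r ∧ IsSkewSYT pg.1 ⊥ pg.2) ∧ IsHorizontalStrip pg.1 μ.1} :=
      fun μ => finite_pairs r
        (fun ν f => (ν.card = r ∧ IsSkewSYT ν ⊥ f) ∧ IsHorizontalStrip ν μ.1)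
        (fun ν f h => h.1)
    have hB : (∑ x : {pg : YoungDiagram × (ℕ × ℕ → ℕ) //
          pg.1.card = r ∧ IsSkewSYT pg.1 ⊥ pg.2},
          Nat.card {μ : YoungDiagram // Below μ lam ∧ IsHorizontalStrip x.1.1 μ}) =
        ∑ μ : {μ : YoungDiagram // Below μ lam},
          Nat.card {pg : YoungDiagram × (ℕ × ℕ → ℕ) //
            (pg.1.card = r ∧ IsSkewSYT pg.1 ⊥ pg.2) ∧ IsHorizontalStrip pg.1 μ.1} := by
      rw [← nat_card_sigma, ← nat_card_sigma]
      apply Nat.card_congr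
      exact (subtypeProdSigma (fun pg : YoungDiagram × (ℕ × ℕ → ℕ) =>
          pg.1.card = r ∧ IsSkewSYT pg.1 ⊥ pg.2)
        (fun pg μ => Below μ lam ∧ IsHorizontalStrip pg.1 μ)).symm.trans
        (subtypeProdSigma' (fun pg : YoungDiagram × (ℕ × ℕ → ℕ) =>
          pg.1.card = r ∧ IsSkewSYT pg.1 ⊥ pg.2)
          (fun μ => Below μ lam) (fun pg μ => IsHorizontalStrip pg.1 μ))
    rw [hB]
    have hfib : ∀ μ : {μ : YoungDiagram // Below μ lam},
        Nat.card {pg : YoungDiagram × (ℕ × ℕ → ℕ) //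
            (pg.1.card = r ∧ IsSkewSYT pg.1 ⊥ pg.2) ∧ IsHorizontalStrip pg.1 μ.1} =
        Nat.choose r (lam.card - 1) * Nat.card {f : ℕ × ℕ → ℕ // IsSkewSYT μ.1 ⊥ f} := by
      intro μ
      have hμcard : μ.1.card = lam.card - 1 := by have := μ.2.2; omega
      rw [Nat.card_congr (Equiv.subtypeEquivRight (fun pg => by tauto :
        ∀ pg : YoungDiagram × (ℕ × ℕ → ℕ),
          ((pg.1.card = r ∧ IsSkewSYT pg.1 ⊥ pg.2) ∧ IsHorizontalStrip pg.1 μ.1) ↔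
          (pg.1.card = r ∧ IsHorizontalStrip pg.1 μ.1 ∧ IsSkewSYT pg.1 ⊥ pg.2)))]
      rw [IH μ.1, hμcard]
    rw [Finset.sum_congr rfl (fun μ _ => hfib μ), ← Finset.mul_sum]
    by_cases hm : lam.card = 0
    · have hbot : lam = ⊥ := card_zero_bot hm
      have hempty : IsEmpty {μ : YoungDiagram // Below μ lam} := by
        refine ⟨fun μ => ?_⟩
        have := μ.2.2
        omega
      rw [Finset.univ_eq_empty, Finset.sum_empty, mul_zero, add_zero, hm]
      simp
    · -- branching: ∑ Nat.card {f // Syt μ f} = Nat.card {f // Syt lam f}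
      have hbr : (∑ μ : {μ : YoungDiagram // Below μ lam},
          Nat.card {f : ℕ × ℕ → ℕ // IsSkewSYT μ.1 ⊥ f}) =
          Nat.card {f : ℕ × ℕ → ℕ // IsSkewSYT lam ⊥ f} := by
        haveI instFibS : ∀ μ : {μ : YoungDiagram // Below μ lam},
            Finite {f : ℕ × ℕ → ℕ // IsSkewSYT μ.1 ⊥ f} := fun μ => finite_syt μ.1
        rw [← nat_card_sigma, branching lam (by omega)]
        apply Nat.card_congr
        exact ((subtypeProdSigma (fun μ : YoungDiagram => Below μ lam)
          (fun μ f => IsSkewSYT μ ⊥ f)).symm)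
      rw [hbr]
      obtain ⟨k, hk⟩ : ∃ k, lam.card = k + 1 := ⟨lam.card - 1, by omega⟩
      rw [hk]
      simp only [Nat.add_sub_cancel]
      rw [Nat.choose_succ_succ r k]
      ring

-- new

lemma rowLen_zero_of_colLen_le {μ : YoungDiagram} {i : ℕ} (h : μ.colLen 0 ≤ i) :
    μ.rowLen i = 0 := by
  by_contra hc
  have : (i, 0) ∈ μ := mem_iff_lt_rowLen.2 (by omega)
  rw [mem_iff_lt_colLen] at this
  omega

lemma rowLens_getD (μ : YoungDiagram) (i : ℕ) : μ.rowLens.getD i 0 = μ.rowLen i := by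
  by_cases h : i < μ.rowLens.length
  · rw [List.getD_eq_getElem _ _ h]
    exact get_rowLens
  · push_neg at h
    rw [List.getD_eq_default _ _ h,
      rowLen_zero_of_colLen_le (by rwa [length_rowLens] at h)]

theorem sum_syt_horizontal_strips (lam Λ : YoungDiagram) (r : ℕ)
    (hr : lam.card + lam.rowLen 0 ≤ r)
    (hΛ : Λ.rowLens = (r + lam.rowLen 0 - lam.card) :: lam.rowLens) :
    Nat.card {p : YoungDiagram × (ℕ × ℕ → ℕ) //
        p.1.card = r ∧ IsHorizontalStrip Λ p.1 ∧ IsSkewSYT p.1 ⊥ p.2} =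
      Nat.choose r lam.card * Nat.card {f : ℕ × ℕ → ℕ // IsSkewSYT lam ⊥ f} := by
  have hlen : Λ.colLen 0 = lam.colLen 0 + 1 := by
    have h1 : Λ.rowLens.length = lam.rowLens.length + 1 := by rw [hΛ]; simp
    rwa [length_rowLens, length_rowLens] at h1
  have hΛ0 : Λ.rowLen 0 = r + lam.rowLen 0 - lam.card := by
    have h1 := congrArg (fun l : List ℕ => l.getD 0 0) hΛ
    simp only [rowLens_getD, List.getD_cons_zero] at h1
    exact h1
  have hΛs : ∀ i, Λ.rowLen (i + 1) = lam.rowLen i := by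
    intro i
    have h1 := congrArg (fun l : List ℕ => l.getD (i + 1) 0) hΛ
    simp only [rowLens_getD, List.getD_cons_succ] at h1
    exact h1
  have hmr : lam.card ≤ r := by omega
  have htrans : ∀ ν : YoungDiagram, ν.card = r →
      (IsHorizontalStrip Λ ν ↔ IsHorizontalStrip ν lam) := by
    intro ν hν
    rw [hs_iff, hs_iff]
    constructor
    · rintro ⟨h1, h2⟩
      refine ⟨fun i => ?_, fun i => ?_⟩
      · rw [← hΛs i]; exact h2 i
      · rw [← hΛs i]; exact h1 (i + 1)
    · rintro ⟨h1, h2⟩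
      have hsum1 : ν.card = (∑ i ∈ Finset.range r, ν.rowLen (i + 1)) + ν.rowLen 0 := by
        rw [card_eq_sum_rowLens' ν (K := r + 1)
          (fun c hc => lt_of_lt_of_le (YoungDiagram.fst_lt_card hc) (by omega))]
        exact Finset.sum_range_succ' _ r
      have hsum2 : lam.card = (∑ i ∈ Finset.range r, lam.rowLen (i + 1)) + lam.rowLen 0 := by
        rw [card_eq_sum_rowLens' lam (K := r + 1)
          (fun c hc => lt_of_lt_of_le (YoungDiagram.fst_lt_card hc) (by omega))]
        exact Finset.sum_range_succ' _ r
      have hle : (∑ i ∈ Finset.range r, lam.rowLen (i + 1)) ≤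
          ∑ i ∈ Finset.range r, ν.rowLen (i + 1) :=
        Finset.sum_le_sum (fun i _ => h1 (i + 1))
      refine ⟨fun i => ?_, fun i => ?_⟩
      · match i with
        | 0 =>
          rw [hΛ0]
          have := h1 0
          omega
        | (i + 1) =>
          rw [hΛs i]
          exact h2 i
      · rw [hΛs i]
        exact h1 i
  have e : {p : YoungDiagram × (ℕ × ℕ → ℕ) //
      p.1.card = r ∧ IsHorizontalStrip Λ p.1 ∧ IsSkewSYT p.1 ⊥ p.2} ≃
      {p : YoungDiagram × (ℕ × ℕ → ℕ) //
      p.1.card = r ∧ IsHorizontalStrip p.1 lam ∧ IsSkewSYT p.1 ⊥ p.2} :=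
    Equiv.subtypeEquivRight (fun p => by
      constructor
      · rintro ⟨h1, h2, h3⟩
        exact ⟨h1, (htrans p.1 h1).1 h2, h3⟩
      · rintro ⟨h1, h2, h3⟩
        exact ⟨h1, (htrans p.1 h1).2 h2, h3⟩)
  rw [Nat.card_congr e]
  exact main_count r lam
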